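/- Let U ⊆ ℝⁿ be a connected open set and S ⊆ U a subset that is closed in U. If the (n−1)-dimensional Hausdorff measure of S is zero, then U \ S is path connected. -/

import Mathlib

open MeasureTheory Metric Set ENNReal
open scoped NNReal

/-- Upper bound for the Hausdorff measure of a closed ball in Euclidean space. -/
lemma hball (n : ℕ) (y : EuclideanSpace ℝ (Fin n)) (r : ℝ) (hr : 0 ≤ r) :
    μH[(n:ℝ)] (closedBall y r)
      ≤ (((n:ℝ≥0) ^ ((1:ℝ)/2) : ℝ≥0) : ℝ≥0∞) ^ (n:ℝ) * ENNReal.ofReal ((2*r)^n) := by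
  set e := WithLp.equiv 2 (Fin n → ℝ) with he
  have hanti : AntilipschitzWith ((Fintype.card (Fin n) : ℝ≥0) ^ (1/(2:ℝ≥0∞)).toReal) e :=
    PiLp.antilipschitzWith_ofLp 2 _
  have hcard : ((Fintype.card (Fin n) : ℝ≥0) ^ (1/(2:ℝ≥0∞)).toReal) = (n:ℝ≥0) ^ ((1:ℝ)/2) := by
    simp
  rw [hcard] at hanti
  have hlip : LipschitzWith 1 e := PiLp.lipschitzWith_ofLp 2 _
  have h1 : μH[(n:ℝ)] (closedBall y r)
      ≤ (((n:ℝ≥0) ^ ((1:ℝ)/2) : ℝ≥0) : ℝ≥0∞) ^ (n:ℝ) * μH[(n:ℝ)] (e '' closedBall y r) :=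
    hanti.le_hausdorffMeasure_image (by positivity) _
  have h2 : e '' closedBall y r ⊆ closedBall (e y) r := by
    rintro - ⟨x, hx, rfl⟩
    have := hlip.dist_le_mul x y
    simp only [NNReal.coe_one, one_mul] at this
    exact mem_closedBall.2 (this.trans hx)
  have h3 : μH[(n:ℝ)] (closedBall (e y) r : Set (Fin n → ℝ)) = ENNReal.ofReal ((2*r)^n) := by
    have : (μH[(Fintype.card (Fin n))] : Measure (Fin n → ℝ)) = volume := hausdorffMeasure_pi_real
    rw [Fintype.card_fin] at this
    rw [this, Real.volume_pi_closedBall _ hr, Fintype.card_fin]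
  calc μH[(n:ℝ)] (closedBall y r)
      ≤ _ * μH[(n:ℝ)] (e '' closedBall y r) := h1
    _ ≤ _ * μH[(n:ℝ)] (closedBall (e y) r : Set (Fin n → ℝ)) := mul_le_mul_right (measure_mono h2) _
    _ = _ := by rw [h3]

/-- The `n`-dimensional Hausdorff measure is positive on nonempty open subsets of `ℝⁿ`. -/
lemma hpos (n : ℕ) {O : Set (EuclideanSpace ℝ (Fin n))} (hO : IsOpen O) (hne : O.Nonempty) :
    0 < μH[(n:ℝ)] O := by
  set e := WithLp.equiv 2 (Fin n → ℝ) with he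
  obtain ⟨x, hx⟩ := hne
  obtain ⟨r, hr, hball⟩ := Metric.isOpen_iff.1 hO x hx
  have hanti : AntilipschitzWith ((Fintype.card (Fin n) : ℝ≥0) ^ (1/(2:ℝ≥0∞)).toReal) e :=
    PiLp.antilipschitzWith_ofLp 2 _
  set K : ℝ≥0 := (Fintype.card (Fin n) : ℝ≥0) ^ (1/(2:ℝ≥0∞)).toReal with hK
  set r' : ℝ := r / (K + 1) with hr'
  have hr'pos : 0 < r' := by positivity
  have hsub : ball (e x) r' ⊆ e '' O := by
    intro z hz
    refine ⟨e.symm z, ?_, by simp⟩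
    apply hball
    have h1 : dist (e.symm z) x ≤ K * dist (e (e.symm z)) (e x) := hanti.le_mul_dist _ _
    rw [Equiv.apply_symm_apply] at h1
    have h2 : (K : ℝ) * dist z (e x) < (K + 1) * r' := by
      apply lt_of_le_of_lt (mul_le_mul_of_nonneg_left (le_of_lt (mem_ball.1 hz)) K.coe_nonneg)
      have : (K:ℝ) < K + 1 := by linarith
      exact mul_lt_mul_of_pos_right this hr'pos
    have h3 : ((K:ℝ) + 1) * r' = r := by
      rw [hr']; field_simp
    exact mem_ball.2 (lt_of_le_of_lt h1 (by rw [← h3]; exact h2))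
  have hvol : 0 < μH[(n:ℝ)] (ball (e x) r' : Set (Fin n → ℝ)) := by
    have hpi : (μH[(Fintype.card (Fin n))] : Measure (Fin n → ℝ)) = volume := hausdorffMeasure_pi_real
    rw [Fintype.card_fin] at hpi
    rw [hpi, Real.volume_pi_ball _ hr'pos]
    positivity
  have hlip : LipschitzWith 1 e := PiLp.lipschitzWith_ofLp 2 _
  have himg : μH[(n:ℝ)] (e '' O) ≤ ((1:ℝ≥0):ℝ≥0∞) ^ (n:ℝ) * μH[(n:ℝ)] O :=
    hlip.hausdorffMeasure_image_le (by positivity) _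
  have : 0 < μH[(n:ℝ)] (e '' O) := lt_of_lt_of_le hvol (measure_mono hsub)
  calc (0:ℝ≥0∞) < μH[(n:ℝ)] (e '' O) := this
    _ ≤ _ * μH[(n:ℝ)] O := himg
    _ = μH[(n:ℝ)] O := by simp

/-- In dimension at least 2, line segments (images of intervals under `lineMap`) are null for
the `n`-dimensional Hausdorff measure. -/
lemma linenull {n : ℕ} (hn : 2 ≤ n) (x y : EuclideanSpace ℝ (Fin n)) (c d : ℝ) :
    μH[(n:ℝ)] (AffineMap.lineMap x y '' Icc c d) = 0 := by
  have h1n : (1:ℝ) < (n:ℝ) := by exact_mod_cast hn.trans_lt' one_lt_two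
  refine (MeasureTheory.Measure.hausdorffMeasure_zero_or_top h1n _).resolve_right ?_
  rw [hausdorffMeasure_lineMap_image]
  intro htop
  have h1 : (μH[1] : Measure ℝ) = volume := hausdorffMeasure_real
  rw [h1, Real.volume_Icc] at htop
  have : (nndist x y : ℝ≥0∞) * ENNReal.ofReal (d - c) ≠ ⊤ :=
    ENNReal.mul_ne_top ENNReal.coe_ne_top ENNReal.ofReal_ne_top
  rw [ENNReal.smul_def, smul_eq_mul] at htop
  exact this htop

/-- The cone over a set `u` with apex `a`, with scaling parameters in `[1, M]`. -/
def cone (n : ℕ) (a : EuclideanSpace ℝ (Fin n)) (u : Set (EuclideanSpace ℝ (Fin n))) (M : ℝ) :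
    Set (EuclideanSpace ℝ (Fin n)) :=
  {z | ∃ s ∈ u, ∃ t ∈ Icc (1:ℝ) M, z = a + t • (s - a)}

/-- Measure estimate for the cone over a small set `u` lying in an annulus around `a`. -/
lemma conePiece {n : ℕ} (hn : 2 ≤ n) (a : EuclideanSpace ℝ (Fin n))
    (u : Set (EuclideanSpace ℝ (Fin n))) (ρ R : ℝ) (hρ : 0 < ρ)
    (hu : ∀ s ∈ u, ρ ≤ dist a s ∧ dist a s ≤ R) (hdiam : EMetric.diam u ≤ 1) :
    μH[(n:ℝ)] (cone n a u (R/ρ))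
      ≤ (((n:ℝ≥0) ^ ((1:ℝ)/2) : ℝ≥0) : ℝ≥0∞) ^ (n:ℝ)
        * ENNReal.ofReal ((R/ρ + 2) * (2*(R/ρ + R))^n) * EMetric.diam u ^ ((n:ℝ)-1) := by
  rcases Set.eq_empty_or_nonempty u with rfl | ⟨s₀, hs₀⟩
  · have : cone n a ∅ (R/ρ) = ∅ := by ext z; simp [cone]
    simp [this]
  set M := R/ρ with hMdef
  have hρR : ρ ≤ R := le_trans (hu s₀ hs₀).1 (hu s₀ hs₀).2
  have hM1 : (1:ℝ) ≤ M := (one_le_div hρ).2 hρR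
  have hRpos : (0:ℝ) < R := lt_of_lt_of_le hρ hρR
  have hsubball : u ⊆ closedBall a R := fun s hs => by
    rw [mem_closedBall, dist_comm]; exact (hu s hs).2
  have hbd : Bornology.IsBounded u := (Metric.isBounded_closedBall).subset hsubball
  have hdne : EMetric.diam u ≠ ⊤ := hbd.ediam_ne_top
  set dd := Metric.diam u with hdd
  have hofReal : EMetric.diam u = ENNReal.ofReal dd := by
    rw [hdd, Metric.diam]; exact (ENNReal.ofReal_toReal hdne).symm
  by_cases h0 : EMetric.diam u = 0
  · -- `u` is a subsingleton; the cone is contained in a line segment, which is null.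
    have hsub : ∀ s ∈ u, s = s₀ := fun s hs => EMetric.diam_eq_zero_iff.1 h0 hs hs₀
    have hconesub : cone n a u M ⊆ AffineMap.lineMap a s₀ '' Icc 1 M := by
      rintro z ⟨s, hs, t, ht, rfl⟩
      exact ⟨t, ht, by rw [hsub s hs, AffineMap.lineMap_apply_module]; module⟩
    refine le_trans (measure_mono hconesub) ?_
    rw [linenull hn a s₀ 1 M]
    exact zero_le
  -- positive diameter case
  have hddpos : (0:ℝ) < dd := by
    rw [hdd, Metric.diam]; exact ENNReal.toReal_pos h0 hdne
  have hdd1 : dd ≤ 1 := by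
    rw [hofReal] at hdiam
    exact (ENNReal.ofReal_le_one).1 hdiam
  set N := ⌈(M-1)/dd⌉₊ with hN
  set C := (M + R) * dd with hC
  have hCpos : 0 < C := by positivity
  have hcover : cone n a u M ⊆
      ⋃ j ∈ Finset.range (N+1), closedBall (a + (1 + (j:ℝ)*dd) • (s₀ - a)) C := by
    rintro z ⟨s, hs, t, ⟨ht1, htM⟩, rfl⟩
    set j := ⌊(t-1)/dd⌋₊ with hj
    have ht0 : 0 ≤ (t-1)/dd := div_nonneg (by linarith) hddpos.le
    have hjN : j < N + 1 := by
      have h1 : j ≤ ⌈(t-1)/dd⌉₊ := Nat.floor_le_ceil _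
      have h2 : ⌈(t-1)/dd⌉₊ ≤ N := by
        exact Nat.ceil_le_ceil (by gcongr <;> linarith)
      omega
    refine Set.mem_biUnion (Finset.mem_range.2 hjN) ?_
    have hfl : (j:ℝ)*dd ≤ t - 1 := by
      have h := Nat.floor_le ht0
      rw [← hj] at h
      calc (j:ℝ)*dd ≤ ((t-1)/dd)*dd := mul_le_mul_of_nonneg_right h hddpos.le
        _ = t - 1 := by field_simp
    have hfu : t - 1 < ((j:ℝ)+1)*dd := by
      have h := Nat.lt_floor_add_one ((t-1)/dd)
      rw [← hj] at h
      calc t - 1 = ((t-1)/dd)*dd := by field_simp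
        _ < ((j:ℝ)+1)*dd := mul_lt_mul_of_pos_right h hddpos
    have key : (a + t•(s-a)) - (a + (1+(j:ℝ)*dd)•(s₀-a))
        = t•(s-s₀) + (t-(1+(j:ℝ)*dd))•(s₀-a) := by module
    rw [mem_closedBall, dist_eq_norm, key]
    have hb1 : ‖t•(s-s₀)‖ ≤ M * dd := by
      rw [norm_smul]
      have h1 : ‖s - s₀‖ ≤ dd := by
        rw [← dist_eq_norm]; exact Metric.dist_le_diam_of_mem hbd hs hs₀
      have h2 : |t| ≤ M := by rw [abs_of_nonneg (by linarith)]; exact htM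
      exact mul_le_mul h2 h1 (norm_nonneg _) (by linarith)
    have hb2 : ‖(t-(1+(j:ℝ)*dd))•(s₀-a)‖ ≤ dd * R := by
      rw [norm_smul]
      have h1 : ‖s₀ - a‖ ≤ R := by
        rw [← dist_eq_norm, dist_comm]; exact (hu s₀ hs₀).2
      have h2 : |t-(1+(j:ℝ)*dd)| ≤ dd := by
        rw [abs_le]; constructor <;> nlinarith
      exact mul_le_mul h2 h1 (norm_nonneg _) hddpos.le
    calc ‖t•(s-s₀) + (t-(1+(j:ℝ)*dd))•(s₀-a)‖
        ≤ ‖t•(s-s₀)‖ + ‖(t-(1+(j:ℝ)*dd))•(s₀-a)‖ := norm_add_le _ _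
      _ ≤ M * dd + dd * R := add_le_add hb1 hb2
      _ = C := by rw [hC]; ring
  set κ : ℝ≥0∞ := (((n:ℝ≥0) ^ ((1:ℝ)/2) : ℝ≥0) : ℝ≥0∞) ^ (n:ℝ) with hκ
  have hstep1 : μH[(n:ℝ)] (cone n a u M)
      ≤ (N+1 : ℕ) * (κ * ENNReal.ofReal ((2*C)^n)) := by
    refine (measure_mono hcover).trans ?_
    refine (measure_biUnion_finset_le _ _).trans ?_
    calc ∑ j ∈ Finset.range (N+1), μH[(n:ℝ)] (closedBall (a + (1 + (j:ℝ)*dd) • (s₀ - a)) C)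
        ≤ ∑ _j ∈ Finset.range (N+1), (κ * ENNReal.ofReal ((2*C)^n)) :=
          Finset.sum_le_sum fun j _ => hball n _ C hCpos.le
      _ = (N+1 : ℕ) * (κ * ENNReal.ofReal ((2*C)^n)) := by
          rw [Finset.sum_const, Finset.card_range, nsmul_eq_mul]
  have hreal : ((N:ℝ)+1) * ((2*C)^n) ≤ ((M + 2) * (2*(M+R))^n) * dd^(n-1) := by
    have hNle : (N:ℝ) + 1 ≤ (M+2)/dd := by
      have h1 : (N:ℝ) < (M-1)/dd + 1 := Nat.ceil_lt_add_one (div_nonneg (by linarith) hddpos.le)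
      have h2 : (2:ℝ) ≤ 2/dd := by rw [le_div_iff₀ hddpos]; nlinarith
      have h3 : (M-1)/dd + 2/dd = (M+1)/dd := by ring
      have h4 : (M+1)/dd ≤ (M+2)/dd := by gcongr <;> linarith
      linarith
    have hC2 : ((2*C):ℝ)^n = (2*(M+R))^n * dd^n := by
      rw [hC, show (2:ℝ)*((M+R)*dd) = (2*(M+R))*dd by ring, mul_pow]
    have hdn : dd^n = dd^(n-1) * dd := by
      rw [← pow_succ]; congr 1; omega
    calc ((N:ℝ)+1) * ((2*C)^n) = ((N:ℝ)+1) * ((2*(M+R))^n * (dd^(n-1) * dd)) := by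
          rw [hC2, hdn]
      _ ≤ ((M+2)/dd) * ((2*(M+R))^n * (dd^(n-1) * dd)) := by
          apply mul_le_mul_of_nonneg_right hNle
          positivity
      _ = ((M+2) * (2*(M+R))^n) * dd^(n-1) := by field_simp
  have hfin : ((N:ℝ≥0∞)+1) * ENNReal.ofReal ((2*C)^n)
      ≤ ENNReal.ofReal ((M+2)*(2*(M+R))^n) * EMetric.diam u ^ ((n:ℝ)-1) := by
    rw [hofReal]
    have hcast : ((N:ℝ≥0∞)+1) = ENNReal.ofReal ((N:ℝ)+1) := by
      rw [ENNReal.ofReal_add (by positivity) zero_le_one, ENNReal.ofReal_natCast,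
        ENNReal.ofReal_one]
    rw [hcast, ← ENNReal.ofReal_mul (by positivity)]
    have hrpow : (ENNReal.ofReal dd) ^ ((n:ℝ)-1) = ENNReal.ofReal (dd^(n-1)) := by
      have hc : ((n:ℝ)-1) = ((n-1 : ℕ):ℝ) := by
        push_cast [Nat.cast_sub (by omega : 1 ≤ n)]; ring
      rw [hc, ENNReal.rpow_natCast, ← ENNReal.ofReal_pow hddpos.le]
    rw [hrpow, ← ENNReal.ofReal_mul (by positivity)]
    exact ENNReal.ofReal_le_ofReal hreal
  calc μH[(n:ℝ)] (cone n a u M) ≤ (N+1 : ℕ) * (κ * ENNReal.ofReal ((2*C)^n)) := hstep1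
    _ = κ * (((N:ℝ≥0∞)+1) * ENNReal.ofReal ((2*C)^n)) := by push_cast; ring
    _ ≤ κ * (ENNReal.ofReal ((M+2)*(2*(M+R))^n) * EMetric.diam u ^ ((n:ℝ)-1)) :=
        mul_le_mul_right hfin κ
    _ = κ * ENNReal.ofReal ((M+2)*(2*(M+R))^n) * EMetric.diam u ^ ((n:ℝ)-1) := by ring

/-- The cone over a set of vanishing `(n-1)`-dimensional Hausdorff measure is null. -/
lemma coneNull {n : ℕ} (hn : 2 ≤ n) (a : EuclideanSpace ℝ (Fin n))
    (T : Set (EuclideanSpace ℝ (Fin n))) (ρ R : ℝ) (hρ : 0 < ρ)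
    (hT : ∀ s ∈ T, ρ ≤ dist a s ∧ dist a s ≤ R) (hT0 : μH[(n:ℝ)-1] T = 0) :
    μH[(n:ℝ)] (cone n a T (R/ρ)) = 0 := by
  rcases T.eq_empty_or_nonempty with rfl | ⟨s₀, hs₀⟩
  · have : cone n a ∅ (R/ρ) = ∅ := by ext z; simp [cone]
    simp [this]
  have hρR : ρ ≤ R := le_trans (hT s₀ hs₀).1 (hT s₀ hs₀).2
  have hRpos : (0:ℝ) < R := lt_of_lt_of_le hρ hρR
  have hMpos : (0:ℝ) < R/ρ := div_pos hRpos hρ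
  set K : ℝ≥0∞ := (((n:ℝ≥0) ^ ((1:ℝ)/2) : ℝ≥0) : ℝ≥0∞) ^ (n:ℝ)
      * ENNReal.ofReal ((R/ρ + 2) * (2*(R/ρ + R))^n) with hK
  have hnpos : (0:ℝ≥0) < (n:ℝ≥0) ^ ((1:ℝ)/2) := by
    apply NNReal.rpow_pos
    exact_mod_cast (by omega : 0 < n)
  have hK0 : K ≠ 0 := by
    rw [hK]
    apply mul_ne_zero
    · exact (ENNReal.rpow_pos (by exact_mod_cast hnpos) ENNReal.coe_ne_top).ne'
    · refine (ENNReal.ofReal_pos.2 ?_).ne'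
      have h2 : (0:ℝ) < 2*(R/ρ + R) := by linarith
      exact mul_pos (by linarith) (pow_pos h2 n)
  have hKtop : K ≠ ⊤ :=
    ENNReal.mul_ne_top (ENNReal.rpow_ne_top_of_nonneg (by positivity) ENNReal.coe_ne_top)
      ENNReal.ofReal_ne_top
  have key : ∀ ε : ℝ≥0∞, 0 < ε → μH[(n:ℝ)] (cone n a T (R/ρ)) ≤ ε := by
    intro ε hε
    have hδ : 0 < ε / K := ENNReal.div_pos hε.ne' hKtop
    have h1 : (⨅ (t : ℕ → Set (EuclideanSpace ℝ (Fin n))) (_ : T ⊆ ⋃ i, t i)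
        (_ : ∀ i, EMetric.diam (t i) ≤ 1),
        ∑' i, ⨆ _ : (t i).Nonempty, EMetric.diam (t i) ^ ((n:ℝ)-1)) ≤ 0 := by
      rw [← hT0, MeasureTheory.Measure.hausdorffMeasure_apply]
      exact le_iSup₂ (f := fun (r : ℝ≥0∞) (_ : 0 < r) =>
        ⨅ (t : ℕ → Set (EuclideanSpace ℝ (Fin n))) (_ : T ⊆ ⋃ i, t i)
          (_ : ∀ i, EMetric.diam (t i) ≤ r),
          ∑' i, ⨆ _ : (t i).Nonempty, EMetric.diam (t i) ^ ((n:ℝ)-1)) 1 one_pos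
    have h2 := h1.trans_lt hδ
    simp only [iInf_lt_iff] at h2
    obtain ⟨t, htcov, htdiam, htsum⟩ := h2
    have hsub : cone n a T (R/ρ) ⊆ ⋃ i, cone n a (t i ∩ T) (R/ρ) := by
      rintro z ⟨s, hs, t', ht', rfl⟩
      obtain ⟨i, hi⟩ := mem_iUnion.1 (htcov hs)
      exact mem_iUnion.2 ⟨i, s, ⟨hi, hs⟩, t', ht', rfl⟩
    calc μH[(n:ℝ)] (cone n a T (R/ρ))
        ≤ ∑' i, μH[(n:ℝ)] (cone n a (t i ∩ T) (R/ρ)) :=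
          (measure_mono hsub).trans (measure_iUnion_le _)
      _ ≤ ∑' i, K * (⨆ _ : (t i).Nonempty, EMetric.diam (t i) ^ ((n:ℝ)-1)) := by
          apply ENNReal.tsum_le_tsum; intro i
          rcases (t i ∩ T).eq_empty_or_nonempty with he | hne
          · have : cone n a (t i ∩ T) (R/ρ) = ∅ := by rw [he]; ext z; simp [cone]
            simp [this]
          · have hne' : (t i).Nonempty := hne.mono inter_subset_left
            rw [iSup_pos hne']
            have hc := conePiece hn a (t i ∩ T) ρ R hρ (fun s hs => hT s hs.2)
              ((EMetric.diam_mono inter_subset_left).trans (htdiam i))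
            refine hc.trans ?_
            rw [hK]
            exact mul_le_mul_right
              (ENNReal.rpow_le_rpow (EMetric.diam_mono inter_subset_left)
                (by have h2 : (2:ℝ) ≤ (n:ℝ) := by exact_mod_cast hn
                    linarith)) _
      _ = K * ∑' i, (⨆ _ : (t i).Nonempty, EMetric.diam (t i) ^ ((n:ℝ)-1)) :=
          ENNReal.tsum_mul_left
      _ ≤ K * (ε / K) := mul_le_mul_right htsum.le K
      _ ≤ ε := ENNReal.mul_div_le
  by_contra hne0
  obtain ⟨ε, hε0, hεlt⟩ := exists_between (pos_iff_ne_zero.2 hne0)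
  exact absurd (key ε hε0) (not_le.2 hεlt)

/-- Key local lemma: in a ball contained in `U`, any two points off `S` can be joined
inside `U \ S`. -/
lemma ballJoin {n : ℕ} (hn : 2 ≤ n) (U S : Set (EuclideanSpace ℝ (Fin n)))
    (C : Set (EuclideanSpace ℝ (Fin n))) (hC : IsClosed C) (hSC : S = U ∩ C)
    (hS : μH[(n:ℝ)-1] S = 0) (c : EuclideanSpace ℝ (Fin n)) (r : ℝ) (hr : 0 < r)
    (hUball : closedBall c r ⊆ U)
    {a b : EuclideanSpace ℝ (Fin n)} (ha : a ∈ ball c r \ S) (hb : b ∈ ball c r \ S) :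
    JoinedIn (U \ S) a b := by
  set T := S ∩ closedBall c r with hTdef
  have hTclosed : IsClosed T := by
    have hTeq : T = C ∩ closedBall c r := by
      rw [hTdef, hSC]
      ext x
      constructor
      · rintro ⟨⟨hxU, hxC⟩, hxB⟩; exact ⟨hxC, hxB⟩
      · rintro ⟨hxC, hxB⟩; exact ⟨⟨hUball hxB, hxC⟩, hxB⟩
    rw [hTeq]; exact hC.inter Metric.isClosed_closedBall
  have hT0 : μH[(n:ℝ)-1] T = 0 :=
    le_antisymm ((measure_mono inter_subset_left).trans hS.le) zero_le
  have hseg : ∀ x y : EuclideanSpace ℝ (Fin n), x ∈ ball c r → y ∈ ball c r →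
      (∀ s ∈ T, s ∉ segment ℝ x y) → JoinedIn (U \ S) x y := by
    intro x y hx hy hdisj
    apply JoinedIn.of_segment_subset
    intro z hz
    have hzball : z ∈ ball c r := (convex_ball c r).segment_subset hx hy hz
    refine ⟨hUball (ball_subset_closedBall hzball), fun hzS => ?_⟩
    exact hdisj z ⟨hzS, ball_subset_closedBall hzball⟩ hz
  rcases T.eq_empty_or_nonempty with hTe | hTne
  · refine hseg a b ha.1 hb.1 fun s hs => ?_
    rw [hTe] at hs; exact absurd hs (Set.notMem_empty s)
  -- the cone membership helper
  have hcone : ∀ (x z : EuclideanSpace ℝ (Fin n)) (ρ : ℝ), 0 < ρ →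
      (∀ s ∈ T, ρ ≤ dist x s) → dist x z ≤ 2*r →
      ∀ s ∈ T, s ∈ segment ℝ x z → z ∈ cone n x T (2*r/ρ) := by
    intro x z ρ hρ hxd hxz s hsT hsseg
    rcases hsseg with ⟨u, v, hu, hv, huv, hsum⟩
    have hρs : ρ ≤ dist x s := hxd s hsT
    have hvne : v ≠ 0 := by
      rintro rfl
      have hu1 : u = 1 := by linarith
      rw [hu1, one_smul, zero_smul, add_zero] at hsum
      rw [← hsum, dist_self] at hρs
      linarith
    have hvpos : 0 < v := lt_of_le_of_ne hv (Ne.symm hvne)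
    refine ⟨s, hsT, 1/v, ⟨?_, ?_⟩, ?_⟩
    · rw [le_div_iff₀ hvpos]; linarith
    · -- 1/v ≤ 2r/ρ  from  ρ ≤ dist x s = v * dist x z ≤ v * 2r
      have hdist : dist x s = v * dist x z := by
        have hxs : s - x = v • (z - x) := by
          rw [← hsum]
          have hu1 : u = 1 - v := by linarith
          rw [hu1]; module
        rw [dist_eq_norm, dist_eq_norm, ← neg_sub s x, norm_neg, hxs, norm_smul,
          Real.norm_eq_abs, abs_of_pos hvpos, ← neg_sub z x, norm_neg]
      rw [div_le_div_iff₀ hvpos hρ, one_mul]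
      calc ρ ≤ dist x s := hρs
        _ = v * dist x z := hdist
        _ ≤ v * (2*r) := by
            apply mul_le_mul_of_nonneg_left hxz hvpos.le
        _ = 2*r*v := by ring
    · -- z = x + (1/v) • (s - x)
      have hxs : s - x = v • (z - x) := by
        rw [← hsum]
        have hu1 : u = 1 - v := by linarith
        rw [hu1]; module
      rw [hxs, smul_smul, one_div, inv_mul_cancel₀ hvne, one_smul]
      abel
  have haT : a ∉ T := fun h => ha.2 h.1
  have hbT : b ∉ T := fun h => hb.2 h.1
  set ρa := Metric.infDist a T with hρadef
  set ρb := Metric.infDist b T with hρbdef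
  have hρa : 0 < ρa := (hTclosed.notMem_iff_infDist_pos hTne).1 haT
  have hρb : 0 < ρb := (hTclosed.notMem_iff_infDist_pos hTne).1 hbT
  have hdistbound : ∀ x, x ∈ ball c r → ∀ s ∈ T, dist x s ≤ 2*r := by
    intro x hx s hs
    calc dist x s ≤ dist x c + dist c s := dist_triangle _ _ _
      _ ≤ r + r := add_le_add (mem_ball.1 hx).le (by rw [dist_comm]; exact hs.2)
      _ = 2*r := by ring
  have hTa : ∀ s ∈ T, ρa ≤ dist a s ∧ dist a s ≤ 2*r :=
    fun s hs => ⟨Metric.infDist_le_dist_of_mem hs, hdistbound a ha.1 s hs⟩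
  have hTb : ∀ s ∈ T, ρb ≤ dist b s ∧ dist b s ≤ 2*r :=
    fun s hs => ⟨Metric.infDist_le_dist_of_mem hs, hdistbound b hb.1 s hs⟩
  have hBada : μH[(n:ℝ)] (cone n a T (2*r/ρa)) = 0 := coneNull hn a T ρa (2*r) hρa hTa hT0
  have hBadb : μH[(n:ℝ)] (cone n b T (2*r/ρb)) = 0 := coneNull hn b T ρb (2*r) hρb hTb hT0
  have hzex : ∃ z, z ∈ ball c r ∧ z ∉ cone n a T (2*r/ρa) ∧ z ∉ cone n b T (2*r/ρb) := by
    by_contra hcon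
    push_neg at hcon
    have hsub : ball c r ⊆ cone n a T (2*r/ρa) ∪ cone n b T (2*r/ρb) := by
      intro z hz
      by_cases hza : z ∈ cone n a T (2*r/ρa)
      · exact Or.inl hza
      · exact Or.inr (hcon z hz hza)
    have hle := (measure_mono hsub).trans (measure_union_le (μ := μH[(n:ℝ)])
      (cone n a T (2*r/ρa)) (cone n b T (2*r/ρb)))
    rw [hBada, hBadb, add_zero] at hle
    exact absurd (hpos n isOpen_ball (Metric.nonempty_ball.2 hr)) (not_lt.2 hle)
  obtain ⟨z, hzball, hza, hzb⟩ := hzex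
  have hdaz : dist a z ≤ 2*r := by
    calc dist a z ≤ dist a c + dist c z := dist_triangle _ _ _
      _ ≤ r + r := add_le_add (mem_ball.1 ha.1).le (mem_ball'.1 hzball).le
      _ = 2*r := by ring
  have hdbz : dist b z ≤ 2*r := by
    calc dist b z ≤ dist b c + dist c z := dist_triangle _ _ _
      _ ≤ r + r := add_le_add (mem_ball.1 hb.1).le (mem_ball'.1 hzball).le
      _ = 2*r := by ring
  have hJaz : JoinedIn (U \ S) a z := by
    refine hseg a z ha.1 hzball fun s hs hsseg => ?_
    exact hza (hcone a z ρa hρa (fun s' hs' => (hTa s' hs').1) hdaz s hs hsseg)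
  have hJzb : JoinedIn (U \ S) z b := by
    refine hseg z b hzball hb.1 fun s hs hsseg => ?_
    rw [segment_symm] at hsseg
    exact hzb (hcone b z ρb hρb (fun s' hs' => (hTb s' hs').1) hdbz s hs hsseg)
  exact hJaz.trans hJzb

/-- If `U ⊆ ℝⁿ` is open and connected and `S ⊆ U` is relatively closed in `U`
with vanishing (n−1)-dimensional Hausdorff measure, then `U \ S` is path connected. -/
theorem stmt2 (n : ℕ) (U S : Set (EuclideanSpace ℝ (Fin n)))
    (hU : IsOpen U) (hUconn : IsConnected U) (hSU : S ⊆ U)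
    (hSclosed : IsClosed {x : U | (x : EuclideanSpace ℝ (Fin n)) ∈ S})
    (hS : μH[(n : ℝ) - 1] S = 0) :
    IsPathConnected (U \ S) := by
  obtain ⟨C, hCclosed, hCpre⟩ := isClosed_induced_iff.1 hSclosed
  have hSUC : S = U ∩ C := by
    ext x
    constructor
    · intro hx
      refine ⟨hSU hx, ?_⟩
      have : (⟨x, hSU hx⟩ : U) ∈ {x : U | (x : EuclideanSpace ℝ (Fin n)) ∈ S} := hx
      rw [← hCpre] at this
      exact this
    · rintro ⟨hxU, hxC⟩
      have : (⟨x, hxU⟩ : U) ∈ Subtype.val ⁻¹' C := hxC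
      rw [hCpre] at this
      exact this
  rcases lt_or_ge n 2 with hn | hn
  · -- low dimensions: `S` must be empty
    have hSempty : S = ∅ := by
      by_contra h
      obtain ⟨x, hx⟩ := Set.nonempty_iff_ne_empty.2 h
      have h1 : (1:ℝ≥0∞) ≤ μH[(0:ℝ)] S :=
        MeasureTheory.Measure.one_le_hausdorffMeasure_zero_of_nonempty ⟨x, hx⟩
      have h2 : μH[(0:ℝ)] S ≤ μH[(n:ℝ)-1] S := by
        apply MeasureTheory.Measure.hausdorffMeasure_mono
        have : (n:ℝ) ≤ 1 := by exact_mod_cast Nat.lt_succ_iff.1 hn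
        linarith
      rw [hS] at h2
      exact absurd (h1.trans h2) (by simp)
    rw [hSempty, diff_empty]
    exact hU.isConnected_iff_isPathConnected.1 hUconn
  -- main case `n ≥ 2`
  set V := U \ S with hVdef
  have hSn : μH[(n:ℝ)] S = 0 := by
    refine le_antisymm (le_trans ?_ hS.le) zero_le
    exact MeasureTheory.Measure.hausdorffMeasure_mono (by linarith) S
  have hcb : ∀ u ∈ U, ∃ r > (0:ℝ), closedBall u r ⊆ U := by
    intro u hu
    obtain ⟨ε, hε, hball⟩ := Metric.isOpen_iff.1 hU u hu
    exact ⟨ε/2, by positivity, (closedBall_subset_ball (by linarith)).trans hball⟩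
  have hVne : V.Nonempty := by
    by_contra h
    have hUS : U ⊆ S := by
      intro x hx
      by_contra hxS
      exact h ⟨x, hx, hxS⟩
    have hU0 : μH[(n:ℝ)] U = 0 := le_antisymm ((measure_mono hUS).trans hSn.le) zero_le
    exact absurd (hpos n hU hUconn.nonempty) (by rw [hU0]; simp)
  obtain ⟨x₀, hx₀⟩ := hVne
  set A := {u : EuclideanSpace ℝ (Fin n) | ∃ r > (0:ℝ), closedBall u r ⊆ U ∧
      ∀ y ∈ ball u r \ S, JoinedIn V x₀ y} with hAdef
  have hAopen : IsOpen A := by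
    rw [Metric.isOpen_iff]
    rintro u ⟨r, hr, hbU, hjoin⟩
    refine ⟨r/2, by positivity, ?_⟩
    intro u' hu'
    refine ⟨r/2, by positivity, ?_, ?_⟩
    · intro y hy
      apply hbU
      rw [mem_closedBall] at hy ⊢
      calc dist y u ≤ dist y u' + dist u' u := dist_triangle _ _ _
        _ ≤ r/2 + r/2 := add_le_add hy (mem_ball.1 hu').le
        _ = r := by ring
    · intro y hy
      apply hjoin
      refine ⟨?_, hy.2⟩
      rw [mem_ball] at *
      calc dist y u ≤ dist y u' + dist u' u := dist_triangle _ _ _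
        _ < r/2 + r/2 := add_lt_add_of_lt_of_le hy.1 (mem_ball.1 hu').le
        _ = r := by ring
  have hx₀A : x₀ ∈ A := by
    obtain ⟨r, hr, hbU⟩ := hcb x₀ hx₀.1
    exact ⟨r, hr, hbU, fun y hy =>
      ballJoin hn U S C hCclosed hSUC hS x₀ r hr hbU ⟨mem_ball_self hr, hx₀.2⟩ hy⟩
  have hclos : closure A ∩ U ⊆ A := by
    rintro u ⟨huA, huU⟩
    obtain ⟨r, hr, hbU⟩ := hcb u huU
    obtain ⟨u'', hu''ball, hu''A⟩ :=
      (mem_closure_iff.1 huA (ball u r) isOpen_ball (mem_ball_self hr))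
    obtain ⟨r'', hr'', hbU'', hjoin''⟩ := hu''A
    set O := ball u'' r'' ∩ ball u r with hO
    have hOopen : IsOpen O := isOpen_ball.inter isOpen_ball
    have hOne : O.Nonempty := ⟨u'', mem_ball_self hr'', hu''ball⟩
    have hOpos : 0 < μH[(n:ℝ)] O := hpos n hOopen hOne
    have hnsub : ¬ (O ⊆ S) := by
      intro hOS
      exact absurd hOpos (by
        rw [not_lt, ← hSn]
        exact measure_mono hOS)
    obtain ⟨w, hwO, hwS⟩ := Set.not_subset.1 hnsub
    have hJw : JoinedIn V x₀ w := hjoin'' w ⟨hwO.1, hwS⟩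
    refine ⟨r, hr, hbU, fun y hy => ?_⟩
    exact hJw.trans (ballJoin hn U S C hCclosed hSUC hS u r hr hbU ⟨hwO.2, hwS⟩ hy)
  have hUA : U ⊆ A :=
    hUconn.isPreconnected.subset_of_closure_inter_subset hAopen ⟨x₀, hx₀.1, hx₀A⟩ hclos
  refine ⟨x₀, hx₀, fun {y} hy => ?_⟩
  obtain ⟨r, hr, hbU, hjoin⟩ := hUA hy.1
  exact hjoin y ⟨mem_ball_self hr, hy.2⟩
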